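/- Let V be a finite index set and let (μ⁽¹⁾, Σ⁽¹⁾), (μ⁽²⁾, Σ⁽²⁾) be two pairs of mean vectors and symmetric positive definite covariance matrices indexed by V. If D₁ ⊆ V and D₂ ⊆ V are both seed sets for the two pairs, then D₁ ∩ D₂ is also a seed set for the two pairs. -/

import Mathlib

open Matrix

/-- Sub-matrix of `M` with rows indexed by `A` and columns indexed by `B`. -/
def msub {V : Type*} [Fintype V] [DecidableEq V] (M : Matrix V V ℝ) (A B : Finset V) :
    Matrix A B ℝ :=
  M.submatrix (fun a => a.1) (fun b => b.1)

/-- Principal sub-matrix of `M` indexed by the finset `A`. -/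
def psub {V : Type*} [Fintype V] [DecidableEq V] (M : Matrix V V ℝ) (A : Finset V) :
    Matrix A A ℝ :=
  msub M A A

/-- Sub-vector of `x` indexed by the finset `A`. -/
def rest {V : Type*} (x : V → ℝ) (A : Finset V) : A → ℝ := fun a => x a.1

/-- The conditional parameters of `X_B` given `X_S` for a Gaussian vector with
parameters `(μ, Σ)`: the triple
`(μ_B − Σ_{B,S} Σ_S⁻¹ μ_S, Σ_{B,S} Σ_S⁻¹, Σ_B − Σ_{B,S} Σ_S⁻¹ Σ_{S,B})`. -/
noncomputable def condParams {V : Type*} [Fintype V] [DecidableEq V]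
    (μ : V → ℝ) (Sg : Matrix V V ℝ) (B S : Finset V) :
    (B → ℝ) × Matrix B S ℝ × Matrix B B ℝ :=
  (rest μ B - (msub Sg B S * (psub Sg S)⁻¹) *ᵥ rest μ S,
   msub Sg B S * (psub Sg S)⁻¹,
   psub Sg B - msub Sg B S * (psub Sg S)⁻¹ * msub Sg S B)

/-- `D` is a seed set for the pairs `(μ⁽¹⁾, Σ⁽¹⁾)`, `(μ⁽²⁾, Σ⁽²⁾)` if the conditional
parameters of `X_{V∖D}` given `X_D` coincide for the two pairs.  (For `D = V` the
condition is vacuous, and for `D = ∅` it amounts to equality of the two pairs.) -/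
def IsSeedSet {V : Type*} [Fintype V] [DecidableEq V]
    (μ₁ : V → ℝ) (S₁ : Matrix V V ℝ) (μ₂ : V → ℝ) (S₂ : Matrix V V ℝ)
    (D : Finset V) : Prop :=
  condParams μ₁ S₁ Dᶜ D = condParams μ₂ S₂ Dᶜ D


section Aux
variable {V : Type*} [Fintype V] [DecidableEq V]


lemma msub_mul_split (M N : Matrix V V ℝ) (A C S : Finset V) :
    msub (M * N) A C = msub M A S * msub N S C + msub M A Sᶜ * msub N Sᶜ C := by
  ext i j
  simp only [msub, submatrix_apply, Matrix.add_apply, Matrix.mul_apply]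
  rw [Finset.sum_coe_sort S (fun k => M i.1 k * N k j.1),
      Finset.sum_coe_sort Sᶜ (fun k => M i.1 k * N k j.1),
      Finset.sum_add_sum_compl S]

lemma rest_mulVec_split (M : Matrix V V ℝ) (x : V → ℝ) (A S : Finset V) :
    rest (M *ᵥ x) A = msub M A S *ᵥ rest x S + msub M A Sᶜ *ᵥ rest x Sᶜ := by
  funext i
  simp only [rest, msub, submatrix_apply, Pi.add_apply, mulVec, dotProduct]
  rw [Finset.sum_coe_sort S (fun k => M i.1 k * x k),
      Finset.sum_coe_sort Sᶜ (fun k => M i.1 k * x k),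
      Finset.sum_add_sum_compl S]

lemma psub_one (A : Finset V) : psub (1 : Matrix V V ℝ) A = 1 := by
  ext i j
  simp only [psub, msub, submatrix_apply, Matrix.one_apply, Subtype.coe_inj]

lemma msub_one_compl (A : Finset V) : msub (1 : Matrix V V ℝ) Aᶜ A = 0 := by
  ext i j
  have : (i : V) ≠ j := fun h => (Finset.mem_compl.mp i.2) (h ▸ j.2)
  simp [msub, Matrix.one_apply, this]

lemma psub_posDef {M : Matrix V V ℝ} (hM : M.PosDef) (A : Finset V) : (psub M A).PosDef := by
  rw [Matrix.posDef_iff_dotProduct_mulVec]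
  constructor
  · show (psub M A)ᴴ = psub M A
    ext i j
    simpa [psub, msub] using congrFun (congrFun hM.1 i.1) j.1
  · intro x hx
    set y : V → ℝ := fun v => if h : v ∈ A then x ⟨v, h⟩ else 0 with hy
    have hyA : ∀ i : A, y i.1 = x i := fun i => dif_pos i.2
    have hy0 : ∀ v ∉ A, y v = 0 := fun v hv => dif_neg hv
    have hyne : y ≠ 0 := by
      intro h
      apply hx
      funext i
      have := congrFun h i.1
      rw [hyA] at this
      simpa using this
    have inner : ∀ v, (∑ w, M v w * y w) = ∑ w ∈ A, M v w * y w :=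
      fun v => (Finset.sum_subset A.subset_univ (fun w _ hw => by rw [hy0 w hw, mul_zero])).symm
    have key : dotProduct (star x) (psub M A *ᵥ x) = dotProduct (star y) (M *ᵥ y) := by
      simp only [star_trivial, dotProduct, mulVec, psub, msub, submatrix_apply]
      have h1 : (∑ v, y v * ∑ w, M v w * y w) = ∑ v ∈ A, y v * ∑ w ∈ A, M v w * y w := by
        rw [← Finset.sum_subset A.subset_univ (fun v _ hv => by rw [hy0 v hv, zero_mul])]
        exact Finset.sum_congr rfl fun v _ => by rw [inner v]
      rw [h1, ← Finset.sum_coe_sort A]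
      refine Finset.sum_congr rfl fun i _ => ?_
      rw [hyA, ← Finset.sum_coe_sort A]
      exact congrArg _ (Finset.sum_congr rfl fun j _ => by rw [hyA])
    rw [key]
    exact hM.dotProduct_mulVec_pos hyne

lemma psub_isUnit_det {M : Matrix V V ℝ} (hM : M.PosDef) (A : Finset V) :
    IsUnit (psub M A).det :=
  isUnit_iff_ne_zero.mpr (psub_posDef hM A).det_pos.ne'

lemma eqBD {Sg : Matrix V V ℝ} (hSg : Sg.PosDef) (D : Finset V) :
    psub Sg⁻¹ Dᶜ * msub Sg Dᶜ D = -(msub Sg⁻¹ Dᶜ D * psub Sg D) := by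
  have h := msub_mul_split Sg⁻¹ Sg Dᶜ D D
  rw [Sg.nonsing_inv_mul (isUnit_iff_ne_zero.mpr hSg.det_pos.ne'), msub_one_compl] at h
  have : msub Sg⁻¹ Dᶜ Dᶜ = psub Sg⁻¹ Dᶜ := rfl
  rw [this] at h
  have h2 : psub Sg D = msub Sg D D := rfl
  rw [h2]
  exact eq_neg_of_add_eq_zero_left ((add_comm _ _).trans h.symm)

lemma eqBB {Sg : Matrix V V ℝ} (hSg : Sg.PosDef) (D : Finset V) :
    msub Sg⁻¹ Dᶜ D * msub Sg D Dᶜ + psub Sg⁻¹ Dᶜ * psub Sg Dᶜ = 1 := by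
  have h := msub_mul_split Sg⁻¹ Sg Dᶜ Dᶜ D
  rw [Sg.nonsing_inv_mul (isUnit_iff_ne_zero.mpr hSg.det_pos.ne')] at h
  have h1 : msub (1 : Matrix V V ℝ) Dᶜ Dᶜ = 1 := psub_one Dᶜ
  rw [h1] at h
  exact h.symm

lemma key_reg {Sg : Matrix V V ℝ} (hSg : Sg.PosDef) (D : Finset V) :
    psub Sg⁻¹ Dᶜ * (msub Sg Dᶜ D * (psub Sg D)⁻¹) = -msub Sg⁻¹ Dᶜ D := by
  rw [← Matrix.mul_assoc, eqBD hSg D, Matrix.neg_mul, Matrix.mul_assoc,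
    Matrix.mul_nonsing_inv _ (psub_isUnit_det hSg D), Matrix.mul_one]

lemma key_cov {Sg : Matrix V V ℝ} (hSg : Sg.PosDef) (D : Finset V) :
    psub Sg⁻¹ Dᶜ * (psub Sg Dᶜ - msub Sg Dᶜ D * (psub Sg D)⁻¹ * msub Sg D Dᶜ) = 1 := by
  rw [Matrix.mul_sub, ← Matrix.mul_assoc, ← Matrix.mul_assoc, Matrix.mul_assoc (psub Sg⁻¹ Dᶜ),
    key_reg hSg D, Matrix.neg_mul, sub_neg_eq_add, ← eqBB hSg D]
  rw [add_comm]

lemma key_mean {Sg : Matrix V V ℝ} (hSg : Sg.PosDef) (D : Finset V) (μ : V → ℝ) :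
    psub Sg⁻¹ Dᶜ *ᵥ (rest μ Dᶜ - (msub Sg Dᶜ D * (psub Sg D)⁻¹) *ᵥ rest μ D)
      = rest (Sg⁻¹ *ᵥ μ) Dᶜ := by
  rw [Matrix.mulVec_sub, Matrix.mulVec_mulVec, key_reg hSg D,
    rest_mulVec_split Sg⁻¹ μ Dᶜ D]
  show _ = msub Sg⁻¹ Dᶜ D *ᵥ rest μ D + psub Sg⁻¹ Dᶜ *ᵥ rest μ Dᶜ
  rw [Matrix.neg_mulVec]
  abel


lemma seed_iff (μ₁ μ₂ : V → ℝ) (S₁ S₂ : Matrix V V ℝ) (h₁ : S₁.PosDef) (h₂ : S₂.PosDef)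
    (D : Finset V) :
    IsSeedSet μ₁ S₁ μ₂ S₂ D ↔
      (∀ i ∉ D, ∀ j, S₁⁻¹ i j = S₂⁻¹ i j) ∧
        (∀ i ∉ D, (S₁⁻¹ *ᵥ μ₁) i = (S₂⁻¹ *ᵥ μ₂) i) := by
  have hd₁ : IsUnit (psub S₁⁻¹ Dᶜ).det := psub_isUnit_det h₁.inv Dᶜ
  have hd₂ : IsUnit (psub S₂⁻¹ Dᶜ).det := psub_isUnit_det h₂.inv Dᶜ
  constructor
  · intro hseed
    obtain ⟨hoff, hreg, hcc⟩ :
        (rest μ₁ Dᶜ - (msub S₁ Dᶜ D * (psub S₁ D)⁻¹) *ᵥ rest μ₁ D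
            = rest μ₂ Dᶜ - (msub S₂ Dᶜ D * (psub S₂ D)⁻¹) *ᵥ rest μ₂ D) ∧
          (msub S₁ Dᶜ D * (psub S₁ D)⁻¹ = msub S₂ Dᶜ D * (psub S₂ D)⁻¹) ∧
          (psub S₁ Dᶜ - msub S₁ Dᶜ D * (psub S₁ D)⁻¹ * msub S₁ D Dᶜ
            = psub S₂ Dᶜ - msub S₂ Dᶜ D * (psub S₂ D)⁻¹ * msub S₂ D Dᶜ) := by
      simpa [IsSeedSet, condParams, Prod.mk.injEq] using hseed
    have e₁ := Matrix.inv_eq_right_inv (mul_eq_one_comm.mp (key_cov h₁ D))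
    have e₂ := Matrix.inv_eq_right_inv (mul_eq_one_comm.mp (key_cov h₂ D))
    have hP : psub S₁⁻¹ Dᶜ = psub S₂⁻¹ Dᶜ := by rw [← e₁, hcc, e₂]
    have hM : msub S₁⁻¹ Dᶜ D = msub S₂⁻¹ Dᶜ D := by
      have k₁ := key_reg h₁ D
      have k₂ := key_reg h₂ D
      rw [hP, hreg, k₂] at k₁
      exact (neg_injective k₁).symm
    have hm : rest (S₁⁻¹ *ᵥ μ₁) Dᶜ = rest (S₂⁻¹ *ᵥ μ₂) Dᶜ := by
      rw [← key_mean h₁ D μ₁, ← key_mean h₂ D μ₂, hP, hoff]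
    refine ⟨fun i hi j => ?_, fun i hi => ?_⟩
    · by_cases hj : j ∈ D
      · exact congrFun (congrFun hM ⟨i, Finset.mem_compl.mpr hi⟩) ⟨j, hj⟩
      · exact congrFun (congrFun hP ⟨i, Finset.mem_compl.mpr hi⟩) ⟨j, Finset.mem_compl.mpr hj⟩
    · exact congrFun hm ⟨i, Finset.mem_compl.mpr hi⟩
  · rintro ⟨hK, hKμ⟩
    have hP : psub S₁⁻¹ Dᶜ = psub S₂⁻¹ Dᶜ := by
      ext i j
      exact hK i.1 (Finset.mem_compl.mp i.2) j.1
    have hM : msub S₁⁻¹ Dᶜ D = msub S₂⁻¹ Dᶜ D := by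
      ext i j
      exact hK i.1 (Finset.mem_compl.mp i.2) j.1
    have hm : rest (S₁⁻¹ *ᵥ μ₁) Dᶜ = rest (S₂⁻¹ *ᵥ μ₂) Dᶜ := by
      funext i
      exact hKμ i.1 (Finset.mem_compl.mp i.2)
    have hcc : psub S₁ Dᶜ - msub S₁ Dᶜ D * (psub S₁ D)⁻¹ * msub S₁ D Dᶜ
        = psub S₂ Dᶜ - msub S₂ Dᶜ D * (psub S₂ D)⁻¹ * msub S₂ D Dᶜ := by
      rw [← Matrix.inv_eq_right_inv (key_cov h₁ D), ← Matrix.inv_eq_right_inv (key_cov h₂ D), hP]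
    have hreg : msub S₁ Dᶜ D * (psub S₁ D)⁻¹ = msub S₂ Dᶜ D * (psub S₂ D)⁻¹ := by
      calc msub S₁ Dᶜ D * (psub S₁ D)⁻¹
          = (psub S₁⁻¹ Dᶜ)⁻¹ * (psub S₁⁻¹ Dᶜ * (msub S₁ Dᶜ D * (psub S₁ D)⁻¹)) := by
            rw [← Matrix.mul_assoc, Matrix.nonsing_inv_mul _ hd₁, Matrix.one_mul]
        _ = (psub S₂⁻¹ Dᶜ)⁻¹ * (psub S₂⁻¹ Dᶜ * (msub S₂ Dᶜ D * (psub S₂ D)⁻¹)) := by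
            rw [key_reg h₁ D, key_reg h₂ D, hP, hM]
        _ = msub S₂ Dᶜ D * (psub S₂ D)⁻¹ := by
            rw [← Matrix.mul_assoc, Matrix.nonsing_inv_mul _ hd₂, Matrix.one_mul]
    have hoff : rest μ₁ Dᶜ - (msub S₁ Dᶜ D * (psub S₁ D)⁻¹) *ᵥ rest μ₁ D
        = rest μ₂ Dᶜ - (msub S₂ Dᶜ D * (psub S₂ D)⁻¹) *ᵥ rest μ₂ D := by
      calc rest μ₁ Dᶜ - (msub S₁ Dᶜ D * (psub S₁ D)⁻¹) *ᵥ rest μ₁ D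
          = (psub S₁⁻¹ Dᶜ)⁻¹ *ᵥ (psub S₁⁻¹ Dᶜ *ᵥ
              (rest μ₁ Dᶜ - (msub S₁ Dᶜ D * (psub S₁ D)⁻¹) *ᵥ rest μ₁ D)) := by
            rw [Matrix.mulVec_mulVec, Matrix.nonsing_inv_mul _ hd₁, Matrix.one_mulVec]
        _ = (psub S₂⁻¹ Dᶜ)⁻¹ *ᵥ (psub S₂⁻¹ Dᶜ *ᵥ
              (rest μ₂ Dᶜ - (msub S₂ Dᶜ D * (psub S₂ D)⁻¹) *ᵥ rest μ₂ D)) := by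
            rw [key_mean h₁ D μ₁, key_mean h₂ D μ₂, hP, hm]
        _ = rest μ₂ Dᶜ - (msub S₂ Dᶜ D * (psub S₂ D)⁻¹) *ᵥ rest μ₂ D := by
            rw [Matrix.mulVec_mulVec, Matrix.nonsing_inv_mul _ hd₂, Matrix.one_mulVec]
    simp only [IsSeedSet, condParams, Prod.mk.injEq]
    exact ⟨hoff, hreg, hcc⟩

end Aux

/-- The intersection of two seed sets is a seed set. -/
theorem stmt_10 {V : Type*} [Fintype V] [DecidableEq V]
    (μ₁ μ₂ : V → ℝ) (S₁ S₂ : Matrix V V ℝ)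
    (h₁sym : S₁.IsSymm) (h₂sym : S₂.IsSymm)
    (h₁ : S₁.PosDef) (h₂ : S₂.PosDef)
    (D₁ D₂ : Finset V)
    (hseed₁ : IsSeedSet μ₁ S₁ μ₂ S₂ D₁) (hseed₂ : IsSeedSet μ₁ S₁ μ₂ S₂ D₂) :
    IsSeedSet μ₁ S₁ μ₂ S₂ (D₁ ∩ D₂) := by
  rw [seed_iff _ _ _ _ h₁ h₂] at hseed₁ hseed₂ ⊢
  refine ⟨fun i hi j => ?_, fun i hi => ?_⟩ <;>
    rcases (not_and_or.mp (fun h => hi (Finset.mem_inter.mpr h)) : i ∉ D₁ ∨ i ∉ D₂) with h | h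
  · exact hseed₁.1 i h j
  · exact hseed₂.1 i h j
  · exact hseed₁.2 i h
  · exact hseed₂.2 i h
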